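/- arXiv:math/0202083 — 3 statements merged into one kernel-verified Lean document; each statement's English description precedes it below -/
import Mathlib

section
/- Let k > 0 be real and x, y > 0. Define c_k = ∫_ℝ e^{−u²/2} |u|^{2k} du, the rank-one Dunkl heat kernel Γ_k(t,x,y) = (2t)^{−(k+1/2)} c_k^{−1} e^{−(x²+y²)/(4t)} D_k(xy/(2t)) for t > 0, and the Gaussian heat kernel Γ₀(t,x,y) = (4πt)^{−1/2} e^{−(x−y)²/(4t)}. Then lim_{t→0⁺} (xy)^k Γ_k(t,x,y)/Γ₀(t,x,y) = 1. -/
open MeasureTheory Filter Set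

/-- The rank-one Dunkl kernel, defined by its integral representation. -/
noncomputable def Dk (k : ℝ) (u : ℂ) : ℂ :=
  ((Real.Gamma (k + 1/2) / (Real.Gamma (1/2) * Real.Gamma k) : ℝ) : ℂ) *
    ∫ t in Icc (-1 : ℝ) 1,
      Complex.exp ((t : ℂ) * u) * (((1 - t) ^ (k - 1) * (1 + t) ^ k : ℝ) : ℂ)

/-- The Mehta-type normalization constant `c_k = ∫_ℝ e^{-u²/2} |u|^{2k} du`. -/
noncomputable def cK (k : ℝ) : ℝ := ∫ u : ℝ, Real.exp (-u ^ 2 / 2) * |u| ^ (2 * k)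

/-- The rank-one Dunkl heat kernel. -/
noncomputable def heatK (k : ℝ) (t x y : ℝ) : ℂ :=
  (((2 * t) ^ (-(k + 1/2)) : ℝ) : ℂ) * ((cK k : ℝ) : ℂ)⁻¹ *
    ((Real.exp (-(x ^ 2 + y ^ 2) / (4 * t)) : ℝ) : ℂ) * Dk k ((x * y / (2 * t) : ℝ) : ℂ)

/-- The Gaussian heat kernel on `ℝ`. -/
noncomputable def heat0 (t x y : ℝ) : ℝ :=
  (4 * Real.pi * t) ^ (-(1/2) : ℝ) * Real.exp (-(x - y) ^ 2 / (4 * t))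

/-- The real integral appearing in the Dunkl kernel at a real argument. -/
noncomputable def Freal (k u : ℝ) : ℝ :=
  ∫ t in Icc (-1 : ℝ) 1, Real.exp (t * u) * ((1 - t) ^ (k - 1) * (1 + t) ^ k)

lemma Dk_ofReal (k u : ℝ) :
    Dk k (u : ℂ)
      = ((Real.Gamma (k + 1/2) / (Real.Gamma (1/2) * Real.Gamma k) * Freal k u : ℝ) : ℂ) := by
  have h : (∫ t in Icc (-1 : ℝ) 1,
      Complex.exp ((t : ℂ) * (u : ℂ)) * (((1 - t) ^ (k - 1) * (1 + t) ^ k : ℝ) : ℂ))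
      = ∫ t in Icc (-1 : ℝ) 1, ((Real.exp (t * u) * ((1 - t) ^ (k - 1) * (1 + t) ^ k) : ℝ) : ℂ) := by
    refine setIntegral_congr_fun measurableSet_Icc (fun t _ => ?_)
    push_cast [Complex.ofReal_exp]
    ring
  have h2 : (∫ t in Icc (-1 : ℝ) 1,
        ((Real.exp (t * u) * ((1 - t) ^ (k - 1) * (1 + t) ^ k) : ℝ) : ℂ))
      = ((∫ t in Icc (-1 : ℝ) 1, Real.exp (t * u) * ((1 - t) ^ (k - 1) * (1 + t) ^ k) : ℝ) : ℂ) :=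
    integral_ofReal
  rw [Dk, h, h2, Freal, Complex.ofReal_mul]

lemma cK_eq {k : ℝ} (hk : 0 < k) : cK k = 2 ^ (k + 1/2) * Real.Gamma (k + 1/2) := by
  have h0 : cK k = 2 * ∫ u in Ioi (0:ℝ), u ^ (2*k) * Real.exp (-(1/2) * u ^ (2:ℝ)) := by
    rw [cK]
    have h : ∀ u : ℝ, Real.exp (-u ^ 2 / 2) * |u| ^ (2 * k)
        = (fun v => v ^ (2*k) * Real.exp (-(1/2) * v ^ (2:ℝ))) |u| := by
      intro u
      simp only [Real.rpow_two, sq_abs]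
      rw [mul_comm]
      congr 2
      ring
    rw [integral_congr_ae (Eventually.of_forall h),
      integral_comp_abs (f := fun v => v ^ (2*k) * Real.exp (-(1/2) * v ^ (2:ℝ)))]
  rw [h0, integral_rpow_mul_exp_neg_mul_rpow two_pos (by linarith) (by norm_num)]
  have h1 : -(2*k+1)/2 = -(k+1/2) := by ring
  have h2 : (2*k+1)/2 = k+1/2 := by ring
  rw [h1, h2, one_div, Real.inv_rpow (by norm_num), Real.rpow_neg (by norm_num), inv_inv]
  ring

lemma key {k : ℝ} {u : ℝ} (hu : 0 < u) :
    u ^ k * Real.exp (-u) * Freal k u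
      = ∫ s in Ioc (0:ℝ) (2*u), Real.exp (-s) * s ^ (k-1) * (2 - s/u) ^ k := by
  set g : ℝ → ℝ := fun t => Real.exp (t * u) * ((1 - t) ^ (k - 1) * (1 + t) ^ k) with hg
  have h1 : Freal k u = ∫ t in (-1 : ℝ)..1, g t := by
    rw [Freal, integral_Icc_eq_integral_Ioc, intervalIntegral.integral_of_le (by norm_num)]
  have hc : (-(1/u)) ≠ 0 := neg_ne_zero.mpr (by positivity)
  have h2 : (∫ s in (0:ℝ)..(2*u), g ((-(1/u)) * s + 1))
      = (-(1/u))⁻¹ • ∫ t in ((-(1/u)) * 0 + 1)..((-(1/u)) * (2*u) + 1), g t :=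
    intervalIntegral.integral_comp_mul_add g hc 1
  have e1 : (-(1/u)) * 0 + 1 = (1:ℝ) := by ring
  have e2 : (-(1/u)) * (2*u) + 1 = (-1:ℝ) := by field_simp; ring
  have e3 : (-(1/u))⁻¹ = -u := by field_simp
  rw [e1, e2, e3, intervalIntegral.integral_symm (-1 : ℝ) 1, smul_eq_mul] at h2
  have h3 : Freal k u = (1/u) * ∫ s in (0:ℝ)..(2*u), g ((-(1/u)) * s + 1) := by
    rw [h1, h2]
    field_simp
  rw [h3, intervalIntegral.integral_of_le (by positivity), ← integral_const_mul,
    ← integral_const_mul]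
  refine setIntegral_congr_fun measurableSet_Ioc (fun s hs => ?_)
  obtain ⟨hs0, hs2⟩ := hs
  simp only [hg]
  have hw1 : 1 - ((-(1/u)) * s + 1) = s / u := by field_simp; ring
  have hw2 : 1 + ((-(1/u)) * s + 1) = 2 - s / u := by field_simp; ring
  have hw3 : ((-(1/u)) * s + 1) * u = u - s := by field_simp; ring
  rw [hw1, hw2, hw3]
  have hdiv : (s / u) ^ (k - 1) = s ^ (k-1) / u ^ (k-1) :=
    Real.div_rpow hs0.le hu.le (k-1)
  have hupow : u ^ k = u ^ (k-1) * u := by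
    rw [← Real.rpow_add_one hu.ne' (k-1)]; ring_nf
  rw [hdiv, hupow, Real.exp_sub, Real.exp_neg, Real.exp_neg]
  have h4 : u ^ (k-1) > 0 := Real.rpow_pos_of_pos hu _
  field_simp

lemma tendsto_I {k : ℝ} (hk : 0 < k) :
    Tendsto (fun u : ℝ => ∫ s in Ioc (0:ℝ) (2*u), Real.exp (-s) * s ^ (k-1) * (2 - s/u) ^ k)
      atTop (nhds (2 ^ k * Real.Gamma k)) := by
  have hmeas : ∀ u : ℝ, AEStronglyMeasurable
      (indicator (Ioc (0:ℝ) (2*u)) (fun s => Real.exp (-s) * s ^ (k-1) * (2 - s/u) ^ k))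
      volume := by
    intro u
    refine (Measurable.indicator ?_ measurableSet_Ioc).aestronglyMeasurable
    fun_prop
  have hbound_int : Integrable
      (indicator (Ioi (0:ℝ)) (fun s => Real.exp (-s) * s ^ (k-1) * 2 ^ k)) volume := by
    rw [integrable_indicator_iff measurableSet_Ioi]
    exact ((Real.GammaIntegral_convergent hk).mul_const _)
  have hle : ∀ᶠ u in atTop, ∀ᵐ s : ℝ, ‖indicator (Ioc (0:ℝ) (2*u))
      (fun s => Real.exp (-s) * s ^ (k-1) * (2 - s/u) ^ k) s‖
      ≤ indicator (Ioi (0:ℝ)) (fun s => Real.exp (-s) * s ^ (k-1) * 2 ^ k) s := by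
    filter_upwards [eventually_gt_atTop (0:ℝ)] with u hu
    refine Eventually.of_forall (fun s => ?_)
    by_cases hs : s ∈ Ioc (0:ℝ) (2*u)
    · rw [indicator_of_mem hs, indicator_of_mem (mem_Ioi.mpr hs.1)]
      have h1 : 0 ≤ s / u := div_nonneg hs.1.le hu.le
      have h2 : s / u ≤ 2 := (div_le_iff₀ hu).mpr (by linarith [hs.2])
      have h3 : (0:ℝ) ≤ 2 - s/u := by linarith
      have h4 : (2 - s/u) ^ k ≤ 2 ^ k := Real.rpow_le_rpow h3 (by linarith) hk.le
      have h5 : (0:ℝ) ≤ Real.exp (-s) * s ^ (k-1) :=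
        mul_nonneg (Real.exp_pos _).le (Real.rpow_nonneg hs.1.le _)
      rw [Real.norm_eq_abs, abs_of_nonneg (mul_nonneg h5 (Real.rpow_nonneg h3 _))]
      exact mul_le_mul_of_nonneg_left h4 h5
    · rw [indicator_of_notMem hs, norm_zero]
      by_cases hs' : s ∈ Ioi (0:ℝ)
      · rw [indicator_of_mem hs']
        have : (0:ℝ) < s := hs'
        positivity
      · rw [indicator_of_notMem hs']
  have hlim : ∀ᵐ s : ℝ, Tendsto (fun u : ℝ => indicator (Ioc (0:ℝ) (2*u))
      (fun s => Real.exp (-s) * s ^ (k-1) * (2 - s/u) ^ k) s) atTop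
      (nhds (indicator (Ioi (0:ℝ)) (fun s => Real.exp (-s) * s ^ (k-1) * 2 ^ k) s)) := by
    refine Eventually.of_forall (fun s => ?_)
    by_cases hs : 0 < s
    · rw [indicator_of_mem (mem_Ioi.mpr hs)]
      have h1 : Tendsto (fun u : ℝ => Real.exp (-s) * s ^ (k-1) * (2 - s/u) ^ k) atTop
          (nhds (Real.exp (-s) * s ^ (k-1) * 2 ^ k)) := by
        refine Tendsto.const_mul _ ?_
        have h2 : Tendsto (fun u : ℝ => 2 - s/u) atTop (nhds 2) := by
          have := (tendsto_const_nhds (x := s) (f := atTop (α := ℝ))).div_atTop tendsto_id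
          simpa using (tendsto_const_nhds (x := (2:ℝ))).sub this
        simpa using h2.rpow_const (Or.inl (by norm_num))
      refine h1.congr' ?_
      filter_upwards [eventually_ge_atTop s] with u hu
      rw [indicator_of_mem (mem_Ioc.mpr ⟨hs, by linarith⟩)]
    · rw [indicator_of_notMem (by simpa using hs)]
      refine tendsto_const_nhds.congr (fun u => ?_)
      rw [indicator_of_notMem (fun h => hs h.1)]
  have h := tendsto_integral_filter_of_dominated_convergence _
    (Eventually.of_forall hmeas) hle hbound_int hlim
  have hval : ∫ s : ℝ, indicator (Ioi (0:ℝ)) (fun s => Real.exp (-s) * s ^ (k-1) * 2 ^ k) s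
      = 2 ^ k * Real.Gamma k := by
    rw [integral_indicator measurableSet_Ioi, integral_mul_const,
      ← Real.Gamma_eq_integral hk, mul_comm]
  rw [hval] at h
  refine h.congr (fun u => ?_)
  rw [integral_indicator measurableSet_Ioc]

lemma Phi_tendsto {k : ℝ} (hk : 0 < k) :
    Tendsto (fun u : ℝ => Real.sqrt (2*Real.pi) * (cK k)⁻¹ * (u ^ k * Real.exp (-u)) *
      (Real.Gamma (k + 1/2) / (Real.Gamma (1/2) * Real.Gamma k) * Freal k u))
      atTop (nhds 1) := by
  set C : ℝ := Real.sqrt (2*Real.pi) * (cK k)⁻¹ *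
    (Real.Gamma (k + 1/2) / (Real.Gamma (1/2) * Real.Gamma k)) with hC
  have h := (tendsto_I hk).const_mul C
  have hCval : C * (2 ^ k * Real.Gamma k) = 1 := by
    rw [hC, cK_eq hk, Real.Gamma_one_half_eq]
    have hg1 : 0 < Real.Gamma (k + 1/2) := Real.Gamma_pos_of_pos (by linarith)
    have hg2 : 0 < Real.Gamma k := Real.Gamma_pos_of_pos hk
    have hpi : 0 < Real.pi := Real.pi_pos
    have hsπ : 0 < Real.sqrt Real.pi := Real.sqrt_pos.mpr hpi
    have h2k : (0:ℝ) < 2 ^ k := Real.rpow_pos_of_pos two_pos k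
    have hsplit : (2:ℝ) ^ (k + 1/2) = 2 ^ k * Real.sqrt 2 := by
      rw [Real.rpow_add two_pos, Real.sqrt_eq_rpow]
    have hsqrt : Real.sqrt (2*Real.pi) = Real.sqrt 2 * Real.sqrt Real.pi :=
      Real.sqrt_mul (by norm_num) _
    rw [hsplit, hsqrt]
    have hs2 : 0 < Real.sqrt 2 := Real.sqrt_pos.mpr two_pos
    field_simp
  rw [hCval] at h
  refine h.congr' ?_
  filter_upwards [eventually_gt_atTop (0:ℝ)] with u hu0
  rw [← key hu0, hC]
  ring

/-- Short-time asymptotics of the rank-one Dunkl heat kernel: after multiplication by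
`(xy)^k`, the quotient of the Dunkl heat kernel `Γ_k(t,x,y)` by the Gaussian heat kernel
`Γ₀(t,x,y)` tends to `1` as `t → 0⁺`. -/
theorem dunkl_stmt13 (k : ℝ) (hk : 0 < k) (x y : ℝ) (hx : 0 < x) (hy : 0 < y) :
    Tendsto (fun t : ℝ =>
        (((x * y) ^ k : ℝ) : ℂ) * heatK k t x y / ((heat0 t x y : ℝ) : ℂ))
      (nhdsWithin 0 (Ioi 0)) (nhds 1) := by
  set Φ : ℝ → ℝ := fun u => Real.sqrt (2*Real.pi) * (cK k)⁻¹ * (u ^ k * Real.exp (-u)) *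
    (Real.Gamma (k + 1/2) / (Real.Gamma (1/2) * Real.Gamma k) * Freal k u) with hΦdef
  have hu : Tendsto (fun t : ℝ => x*y/(2*t)) (nhdsWithin 0 (Ioi 0)) atTop := by
    have h1 : Tendsto (fun t : ℝ => x*y/2 * t⁻¹) (nhdsWithin 0 (Ioi 0)) atTop :=
      tendsto_inv_nhdsGT_zero.const_mul_atTop (by positivity)
    refine h1.congr (fun t => ?_)
    ring
  have hreal : Tendsto (fun t : ℝ => Φ (x*y/(2*t))) (nhdsWithin 0 (Ioi 0)) (nhds 1) :=
    (Phi_tendsto hk).comp hu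
  have hcx : Tendsto (fun t : ℝ => ((Φ (x*y/(2*t)) : ℝ) : ℂ)) (nhdsWithin 0 (Ioi 0))
      (nhds 1) := by
    have := (Complex.continuous_ofReal.tendsto 1).comp hreal
    simpa [Function.comp_def] using this
  refine Tendsto.congr' ?_ hcx
  refine eventuallyEq_of_mem self_mem_nhdsWithin (fun t ht => ?_)
  have ht : (0:ℝ) < t := ht
  have h2t : (0:ℝ) < 2*t := by linarith
  have h4t : (0:ℝ) < 4*t := by linarith
  have hpi : 0 < Real.pi := Real.pi_pos
  have h4pt : (0:ℝ) < 4*Real.pi*t := by positivity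
  set u : ℝ := x*y/(2*t) with hudef
  have hupos : 0 < u := by positivity
  -- reduce to a real identity
  have hheat : heatK k t x y = (((2 * t) ^ (-(k + 1/2)) * (cK k)⁻¹ *
      Real.exp (-(x ^ 2 + y ^ 2) / (4 * t)) *
      (Real.Gamma (k + 1/2) / (Real.Gamma (1/2) * Real.Gamma k) * Freal k u) : ℝ) : ℂ) := by
    rw [heatK, Dk_ofReal]
    push_cast
    ring
  rw [hheat, ← Complex.ofReal_mul, ← Complex.ofReal_div]
  rw [Complex.ofReal_inj]
  -- the real identity
  have hE : Real.exp (-(x^2+y^2)/(4*t)) = Real.exp (-(x-y)^2/(4*t)) * Real.exp (-u) := by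
    rw [← Real.exp_add]
    congr 1
    rw [hudef]
    field_simp
    ring
  have hP : (x*y)^k * (2*t)^(-(k+1/2)) = u^k * Real.sqrt (2*Real.pi) *
      (4*Real.pi*t)^(-(1/2) : ℝ) := by
    have hsplit : (2*t)^(-(k+1/2)) = (2*t)^(-k) * (2*t)^(-(1/2):ℝ) := by
      rw [← Real.rpow_add h2t]
      congr 1
      ring
    have hxykt : (x*y)^k * (2*t)^(-k) = u^k := by
      rw [Real.rpow_neg h2t.le, hudef, Real.div_rpow (by positivity) h2t.le,
        div_eq_mul_inv]
    have h2pi : (0:ℝ) < 2*Real.pi := by positivity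
    have hmul : (4*Real.pi*t : ℝ) = (2*Real.pi) * (2*t) := by ring
    have hh : (4*Real.pi*t)^(-(1/2):ℝ) = (2*Real.pi)^(-(1/2):ℝ) * (2*t)^(-(1/2):ℝ) := by
      rw [hmul, Real.mul_rpow h2pi.le h2t.le]
    have hcancel : Real.sqrt (2*Real.pi) * (2*Real.pi)^(-(1/2):ℝ) = 1 := by
      rw [Real.sqrt_eq_rpow, ← Real.rpow_add h2pi]
      norm_num
    rw [hsplit, hh, hudef] at *
    calc (x*y)^k * ((2*t)^(-k) * (2*t)^(-(1/2):ℝ))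
        = ((x*y)^k * (2*t)^(-k)) * (2*t)^(-(1/2):ℝ) := by ring
      _ = (x*y/(2*t))^k * (2*t)^(-(1/2):ℝ) := by rw [hxykt]
      _ = (x*y/(2*t))^k * Real.sqrt (2*Real.pi) *
            ((2*Real.pi)^(-(1/2):ℝ) * (2*t)^(-(1/2):ℝ)) := by
          rw [show (x*y/(2*t))^k * Real.sqrt (2*Real.pi) *
              ((2*Real.pi)^(-(1/2):ℝ) * (2*t)^(-(1/2):ℝ))
              = (x*y/(2*t))^k * (2*t)^(-(1/2):ℝ) *
                (Real.sqrt (2*Real.pi) * (2*Real.pi)^(-(1/2):ℝ)) from by ring, hcancel,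
            mul_one]
  have hne : heat0 t x y ≠ 0 := by
    rw [heat0]
    exact ne_of_gt (mul_pos (Real.rpow_pos_of_pos h4pt _) (Real.exp_pos _))
  symm
  rw [div_eq_iff hne, heat0, hE, hΦdef]
  linear_combination ((cK k)⁻¹ * (Real.exp (-(x-y)^2/(4*t)) * Real.exp (-u)) *
    (Real.Gamma (k + 1/2) / (Real.Gamma (1/2) * Real.Gamma k) * Freal k u)) * hP
end

section
/- Let k > 0 be real. Then there exists a constant M > 0 such that s^{2k} |D_k(is)|² ≤ M for all s > 0. -/
open MeasureTheory Filter Set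

open MeasureTheory Filter Set Complex
open scoped ContDiff Interval

namespace DunklAux

noncomputable def chi (u : ℝ) : ℝ := 1 - Real.smoothTransition (3 * u - 2)

lemma chi_contDiff : ContDiff ℝ ∞ chi := by
  unfold chi
  exact contDiff_const.sub (Real.smoothTransition.contDiff.comp (by fun_prop))

lemma chi_eq_one {u : ℝ} (h : u ≤ 2/3) : chi u = 1 := by
  unfold chi
  rw [Real.smoothTransition.zero_of_nonpos (by linarith)]; ring

lemma chi_eq_zero {u : ℝ} (h : 1 ≤ u) : chi u = 0 := by
  unfold chi
  rw [Real.smoothTransition.one_of_one_le (by linarith)]; ring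

def Good (φ : ℝ → ℝ) : Prop := ContDiff ℝ ∞ φ ∧ ∀ v : ℝ, 3/2 ≤ v → φ v = 0

lemma Good.deriv_zero {φ : ℝ → ℝ} (hφ : Good φ) :
    ∀ v : ℝ, 3/2 ≤ v → deriv φ v = 0 := by
  have hd : ContDiff ℝ ∞ (deriv φ) := (contDiff_infty_iff_deriv.mp hφ.1).2
  have hop : ∀ v : ℝ, 3/2 < v → deriv φ v = 0 := by
    intro v hv
    have he : φ =ᶠ[nhds v] (fun _ => 0) := by
      filter_upwards [Ioi_mem_nhds hv] with x hx using hφ.2 x (le_of_lt hx)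
    rw [he.deriv_eq]; simp
  intro v hv
  rcases eq_or_lt_of_le hv with h | h
  · have h1 : Tendsto (deriv φ) (nhdsWithin v (Ioi v)) (nhds (deriv φ v)) :=
      (hd.continuous.continuousAt).continuousWithinAt
    have h2 : Tendsto (deriv φ) (nhdsWithin v (Ioi v)) (nhds 0) := by
      apply Tendsto.congr' _ tendsto_const_nhds
      filter_upwards [self_mem_nhdsWithin] with x hx
      exact (hop x (h ▸ hx)).symm
    exact tendsto_nhds_unique h1 h2
  · exact hop v h

lemma Good.psi {φ : ℝ → ℝ} (hφ : Good φ) (a : ℝ) :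
    Good (fun v => a * φ v + v * deriv φ v) := by
  constructor
  · have h1 := hφ.1
    have h2 : ContDiff ℝ ∞ (deriv φ) := (contDiff_infty_iff_deriv.mp hφ.1).2
    fun_prop
  · intro v hv
    simp only []
    rw [hφ.2 v hv, hφ.deriv_zero v hv]; ring

lemma Good.bound {φ : ℝ → ℝ} (hφ : Good φ) :
    ∃ C : ℝ, 0 ≤ C ∧ ∀ v ∈ Icc (0:ℝ) 2, |φ v| ≤ C := by
  obtain ⟨C, hC⟩ := isCompact_Icc.exists_bound_of_continuousOn
    (hφ.1.continuous.continuousOn (s := Icc (0:ℝ) 2))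
  refine ⟨max C 0, le_max_right _ _, fun v hv => ?_⟩
  exact le_trans (hC v hv) (le_max_left _ _)


lemma ibp (a : ℝ) {φ : ℝ → ℝ} (hφ : Good φ) {s : ℝ} (hs : 1 ≤ s) :
    ∫ v in (1/s)..2, Complex.exp ((s:ℂ)*v*Complex.I) * ((v ^ a * φ v : ℝ) : ℂ)
      = -(((1/s : ℝ) ^ a * φ (1/s) : ℝ) * Complex.exp ((s:ℂ)*(1/s:ℝ)*Complex.I) * (Complex.I*s)⁻¹)
        - (Complex.I*s)⁻¹ * ∫ v in (1/s)..2, Complex.exp ((s:ℂ)*v*Complex.I) *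
            ((v ^ (a-1) * (a * φ v + v * deriv φ v) : ℝ) : ℂ) := by
  have hs0 : (0:ℝ) < s := lt_of_lt_of_le one_pos hs
  have h12 : (1/s : ℝ) ≤ 2 := by
    rw [div_le_iff₀ hs0]; linarith
  have huIcc : [[1/s, 2]] = Icc (1/s : ℝ) 2 := uIcc_of_le h12
  have hpos : ∀ x ∈ [[(1/s:ℝ), 2]], 0 < x := by
    intro x hx
    rw [huIcc] at hx
    exact lt_of_lt_of_le (by positivity) hx.1
  set u : ℝ → ℂ := fun x => ((x ^ a * φ x : ℝ) : ℂ) with hu_def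
  set u' : ℝ → ℂ := fun x => ((a * x ^ (a-1) * φ x + x ^ a * deriv φ x : ℝ) : ℂ) with hu'_def
  set w : ℝ → ℂ := fun x => Complex.exp ((s:ℂ)*x*Complex.I) * (Complex.I*(s:ℂ))⁻¹ with hw_def
  set w' : ℝ → ℂ := fun x => Complex.exp ((s:ℂ)*x*Complex.I) with hw'_def
  have hIs : (Complex.I*(s:ℂ)) ≠ 0 := by
    simp [Complex.I_ne_zero, Complex.ofReal_ne_zero, ne_of_gt hs0]
  have hu : ∀ x ∈ [[(1/s:ℝ), 2]], HasDerivAt u (u' x) x := by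
    intro x hx
    have hx0 : x ≠ 0 := ne_of_gt (hpos x hx)
    have h1 : HasDerivAt (fun x : ℝ => x ^ a * φ x)
        (a * x ^ (a-1) * φ x + x ^ a * deriv φ x) x := by
      have hr : HasDerivAt (fun x : ℝ => x ^ a) (a * x ^ (a-1)) x :=
        Real.hasDerivAt_rpow_const (Or.inl hx0)
      have hp : HasDerivAt φ (deriv φ x) x :=
        (hφ.1.differentiable (by simp)).differentiableAt.hasDerivAt
      exact hr.mul hp
    exact h1.ofReal_comp
  have hw : ∀ x ∈ [[(1/s:ℝ), 2]], HasDerivAt w (w' x) x := by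
    intro x _
    have h1 : HasDerivAt (fun x : ℝ => ((x:ℂ))) 1 x := (hasDerivAt_id x).ofReal_comp
    have h2 : HasDerivAt (fun x : ℝ => (s:ℂ)*x*Complex.I) ((s:ℂ)*Complex.I) x := by
      simpa using (h1.const_mul ((s:ℂ))).mul_const Complex.I
    have h3 := (h2.cexp).mul_const ((Complex.I*(s:ℂ))⁻¹)
    have hc : ((s:ℂ)*Complex.I) * (Complex.I*(s:ℂ))⁻¹ = 1 := by
      rw [mul_comm Complex.I]
      exact mul_inv_cancel₀ (by simp [Complex.I_ne_zero, ne_of_gt hs0])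
    have key : Complex.exp ((s:ℂ)*x*Complex.I) * ((s:ℂ)*Complex.I) * (Complex.I*(s:ℂ))⁻¹ = w' x := by
      rw [hw'_def, mul_assoc, hc, mul_one]
    exact key ▸ h3
  have hcont_u' : ContinuousOn u' [[(1/s:ℝ), 2]] := by
    apply Complex.continuous_ofReal.comp_continuousOn
    apply ContinuousOn.add
    · apply ContinuousOn.mul
      · exact continuousOn_const.mul (fun x hx =>
          (Real.continuousAt_rpow_const x _ (Or.inl (ne_of_gt (hpos x hx)))).continuousWithinAt)
      · exact hφ.1.continuous.continuousOn
    · apply ContinuousOn.mul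
      · exact fun x hx =>
          (Real.continuousAt_rpow_const x _ (Or.inl (ne_of_gt (hpos x hx)))).continuousWithinAt
      · exact ((contDiff_infty_iff_deriv.mp hφ.1).2.continuous).continuousOn
  have hint_u' : IntervalIntegrable u' volume (1/s) 2 := hcont_u'.intervalIntegrable
  have hint_w' : IntervalIntegrable w' volume (1/s) 2 := by
    apply Continuous.intervalIntegrable
    exact Complex.continuous_exp.comp (by fun_prop)
  have H := intervalIntegral.integral_mul_deriv_eq_deriv_mul hu hw hint_u' hint_w'
  have hphi2 : φ 2 = 0 := hφ.2 2 (by norm_num)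
  have hu2 : u 2 = 0 := by simp [hu_def, hphi2]
  rw [hu2] at H
  have He : ∀ x ∈ [[(1/s:ℝ), 2]], u' x * w x
      = (Complex.I*(s:ℂ))⁻¹ * (Complex.exp ((s:ℂ)*x*Complex.I) *
          ((x ^ (a-1) * (a * φ x + x * deriv φ x) : ℝ) : ℂ)) := by
    intro x hx
    have hx0 : x ≠ 0 := ne_of_gt (hpos x hx)
    have hxa : x ^ a = x ^ (a-1) * x := by
      rw [← Real.rpow_add_one hx0 (a-1)]; ring_nf
    simp only [hu'_def, hw_def]
    rw [hxa]
    push_cast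
    ring
  rw [intervalIntegral.integral_congr He] at H
  rw [intervalIntegral.integral_const_mul] at H
  calc ∫ v in (1/s)..2, Complex.exp ((s:ℂ)*v*Complex.I) * ((v ^ a * φ v : ℝ) : ℂ)
      = ∫ v in (1/s)..2, u v * w' v := by
        apply intervalIntegral.integral_congr
        intro x _
        simp only [hu_def, hw'_def]; ring
    _ = _ := by
        rw [H]
        simp only [hu_def, hw_def]
        push_cast
        ring
lemma norm_cexp_I (x y : ℝ) : ‖Complex.exp ((x:ℂ)*(y:ℂ)*Complex.I)‖ = 1 := by
  rw [Complex.norm_exp]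
  have : ((x:ℂ)*(y:ℂ)*Complex.I).re = 0 := by
    simp [Complex.mul_re, Complex.mul_im]
  rw [this, Real.exp_zero]

lemma norm_Is_inv {s : ℝ} (hs0 : 0 < s) : ‖(Complex.I*(s:ℂ))⁻¹‖ = s⁻¹ := by
  rw [norm_inv, norm_mul, Complex.norm_I, Complex.norm_real,
    Real.norm_eq_abs, abs_of_pos hs0, one_mul]

lemma rpow_inv_eq {s : ℝ} (hs0 : 0 < s) (a : ℝ) : ((1/s : ℝ)) ^ a = s ^ (-a) := by
  rw [one_div, ← Real.rpow_neg_one s, ← Real.rpow_mul hs0.le]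
  ring_nf

lemma rpow_mul_inv_eq {s : ℝ} (hs0 : 0 < s) (a : ℝ) : s ^ (-a) * s⁻¹ = s ^ (-(a+1)) := by
  rw [← Real.rpow_neg_one s, ← Real.rpow_add hs0]
  ring_nf

lemma boundary_bound {s : ℝ} (hs : 1 ≤ s) (a : ℝ) {φ : ℝ → ℝ} {C : ℝ} (hC0 : 0 ≤ C)
    (hC : ∀ v ∈ Icc (0:ℝ) 2, |φ v| ≤ C) :
    ‖-((((1/s:ℝ)) ^ a * φ (1/s) : ℝ) * Complex.exp ((s:ℂ)*((1/s:ℝ):ℂ)*Complex.I) * (Complex.I*(s:ℂ))⁻¹)‖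
      ≤ C * s ^ (-(a+1)) := by
  have hs0 : (0:ℝ) < s := lt_of_lt_of_le one_pos hs
  have hmem : (1/s : ℝ) ∈ Icc (0:ℝ) 2 := by
    constructor
    · positivity
    · rw [div_le_iff₀ hs0]; linarith
  rw [norm_neg, norm_mul, norm_mul, norm_cexp_I, norm_Is_inv hs0, mul_one]
  have h1 : ‖((((1/s:ℝ)) ^ a * φ (1/s) : ℝ) : ℂ)‖ = (1/s) ^ a * |φ (1/s)| := by
    rw [Complex.norm_real, Real.norm_eq_abs, abs_mul,
      _root_.abs_of_nonneg (by positivity : (0:ℝ) ≤ (1/s)^a)]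
  rw [h1, rpow_inv_eq hs0]
  calc s ^ (-a) * |φ (1/s)| * s⁻¹ ≤ s ^ (-a) * C * s⁻¹ := by
        apply mul_le_mul_of_nonneg_right _ (by positivity)
        exact mul_le_mul_of_nonneg_left (hC _ hmem) (by positivity)
    _ = C * (s ^ (-a) * s⁻¹) := by ring
    _ = C * s ^ (-(a+1)) := by rw [rpow_mul_inv_eq hs0]

lemma key (n : ℕ) : ∀ a : ℝ, -1 < a → a ≤ n → ∀ φ : ℝ → ℝ, Good φ →
    ∃ C : ℝ, 0 ≤ C ∧ ∀ s : ℝ, 1 ≤ s →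
      ‖∫ v in (1/s)..2, Complex.exp ((s:ℂ)*v*Complex.I) * ((v ^ a * φ v : ℝ) : ℂ)‖
        ≤ C * s ^ (-(a+1)) := by
  induction n with
  | zero =>
    intro a ha han φ hφ
    have ha0 : a ≤ 0 := by exact_mod_cast han
    obtain ⟨Cφ, hCφ0, hCφ⟩ := hφ.bound
    have hGd : Good (deriv φ) := ⟨(contDiff_infty_iff_deriv.mp hφ.1).2, hφ.deriv_zero⟩
    obtain ⟨Cd, hCd0, hCd⟩ := hGd.bound
    have hK0 : (0:ℝ) ≤ Cd * (2 ^ (a+1) / (a+1)) :=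
      mul_nonneg hCd0 (div_nonneg (Real.rpow_nonneg two_pos.le _) (by linarith))
    refine ⟨Cφ + (Cφ + Cd * (2 ^ (a+1) / (a+1))), by linarith, fun s hs => ?_⟩
    have hs0 : (0:ℝ) < s := lt_of_lt_of_le one_pos hs
    have h1s0 : (0:ℝ) < 1/s := by positivity
    have h12 : (1/s : ℝ) ≤ 2 := by rw [div_le_iff₀ hs0]; linarith
    rw [ibp a hφ hs]
    refine le_trans (norm_sub_le _ _) ?_
    have hB := boundary_bound hs a hCφ0 hCφ
    have hJ : ‖∫ v in (1/s)..2, Complex.exp ((s:ℂ)*v*Complex.I) *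
        ((v ^ (a-1) * (a * φ v + v * deriv φ v) : ℝ) : ℂ)‖
        ≤ Cφ * s ^ (-a) + Cd * (2 ^ (a+1) / (a+1)) := by
      have hg_int1 : IntervalIntegrable (fun v : ℝ => v ^ (a-1)) volume (1/s) 2 := by
        apply ContinuousOn.intervalIntegrable
        intro x hx
        rw [uIcc_of_le h12] at hx
        exact (Real.continuousAt_rpow_const x _
          (Or.inl (ne_of_gt (lt_of_lt_of_le h1s0 hx.1)))).continuousWithinAt
      have hg_int2 : IntervalIntegrable (fun v : ℝ => v ^ a) volume (1/s) 2 := by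
        apply ContinuousOn.intervalIntegrable
        intro x hx
        rw [uIcc_of_le h12] at hx
        exact (Real.continuousAt_rpow_const x _
          (Or.inl (ne_of_gt (lt_of_lt_of_le h1s0 hx.1)))).continuousWithinAt
      have hg_int : IntervalIntegrable (fun v : ℝ => |a| * Cφ * v ^ (a-1) + Cd * v ^ a)
          volume (1/s) 2 := (hg_int1.const_mul _).add (hg_int2.const_mul _)
      refine le_trans (intervalIntegral.norm_integral_le_abs_of_norm_le ?_ hg_int) ?_
      · refine (ae_restrict_iff' measurableSet_uIoc).mpr (ae_of_all _ ?_)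
        intro v hv
        rw [uIoc_of_le h12] at hv
        have hv0 : 0 < v := lt_trans h1s0 hv.1
        have hvI : v ∈ Icc (0:ℝ) 2 := ⟨hv0.le, hv.2⟩
        rw [norm_mul, norm_cexp_I, one_mul, Complex.norm_real, Real.norm_eq_abs]
        rw [abs_mul, _root_.abs_of_nonneg (Real.rpow_nonneg hv0.le _)]
        calc v ^ (a-1) * |a * φ v + v * deriv φ v|
            ≤ v ^ (a-1) * (|a| * |φ v| + v * |deriv φ v|) := by
              apply mul_le_mul_of_nonneg_left _ (Real.rpow_nonneg hv0.le _)
              refine le_trans (abs_add_le _ _) ?_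
              rw [abs_mul, abs_mul, _root_.abs_of_nonneg hv0.le]
          _ ≤ v ^ (a-1) * (|a| * Cφ + v * Cd) := by
              apply mul_le_mul_of_nonneg_left _ (Real.rpow_nonneg hv0.le _)
              nlinarith [hCφ v hvI, hCd v hvI, hv0.le, abs_nonneg a,
                abs_nonneg (φ v), abs_nonneg (deriv φ v)]
          _ = |a| * Cφ * v ^ (a-1) + Cd * (v ^ (a-1) * v) := by ring
          _ = |a| * Cφ * v ^ (a-1) + Cd * v ^ a := by
              rw [← Real.rpow_add_one (ne_of_gt hv0) (a-1)]; ring_nf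
      · rw [intervalIntegral.integral_add ((hg_int1.const_mul _)) (hg_int2.const_mul _),
          intervalIntegral.integral_const_mul, intervalIntegral.integral_const_mul]
        have hI2le : Cd * ∫ v in (1/s)..2, v ^ a ≤ Cd * (2 ^ (a+1) / (a+1)) := by
          apply mul_le_mul_of_nonneg_left _ hCd0
          rw [integral_rpow (Or.inl ha)]
          have hnum : (2:ℝ) ^ (a+1) - (1/s) ^ (a+1) ≤ 2 ^ (a+1) := by
            linarith [Real.rpow_nonneg h1s0.le (a+1)]
          gcongr
          linarith
        have hI1le : |a| * Cφ * ∫ v in (1/s)..2, v ^ (a-1) ≤ Cφ * s ^ (-a) := by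
          rcases eq_or_lt_of_le ha0 with h | h
          · rw [h]
            simp only [abs_zero, zero_mul, neg_zero, Real.rpow_zero, mul_one]
            positivity
          · have hne : a - 1 ≠ -1 := by
              intro hc
              exact absurd (by linarith : a = 0) (ne_of_lt h)
            have h0mem : (0:ℝ) ∉ [[1/s, 2]] := by
              rw [uIcc_of_le h12]
              intro hc
              exact absurd hc.1 (not_le.mpr h1s0)
            have ha' : a - 1 + 1 = a := by ring
            have hI1 : ∫ v in (1/s)..2, v ^ (a-1) = (2 ^ a - s ^ (-a))/a := by
              rw [integral_rpow (Or.inr ⟨hne, h0mem⟩), ha', rpow_inv_eq hs0]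
            rw [hI1, abs_of_neg h]
            have h2a : (0:ℝ) < 2 ^ a := Real.rpow_pos_of_pos two_pos a
            have heq : -a * Cφ * ((2 ^ a - s ^ (-a))/a) = Cφ * (s ^ (-a) - 2 ^ a) := by
              field_simp [ne_of_lt h]
              ring
            rw [heq]
            nlinarith [mul_nonneg hCφ0 h2a.le]
        have hpos1 : 0 ≤ ∫ v in (1/s)..2, v ^ (a-1) :=
          intervalIntegral.integral_nonneg h12
            (fun u hu => Real.rpow_nonneg (le_trans h1s0.le hu.1) _)
        have hpos2 : 0 ≤ ∫ v in (1/s)..2, v ^ a :=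
          intervalIntegral.integral_nonneg h12
            (fun u hu => Real.rpow_nonneg (le_trans h1s0.le hu.1) _)
        rw [_root_.abs_of_nonneg (add_nonneg
          (mul_nonneg (mul_nonneg (abs_nonneg a) hCφ0) hpos1) (mul_nonneg hCd0 hpos2))]
        linarith
    have hsle : s⁻¹ ≤ s ^ (-(a+1)) := by
      rw [← Real.rpow_neg_one s]
      exact Real.rpow_le_rpow_of_exponent_le hs (by linarith)
    have hK0 : (0:ℝ) ≤ Cd * (2 ^ (a+1) / (a+1)) := by positivity
    calc ‖-((((1/s:ℝ)) ^ a * φ (1/s) : ℝ) * Complex.exp ((s:ℂ)*((1/s:ℝ):ℂ)*Complex.I) *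
          (Complex.I*(s:ℂ))⁻¹)‖ + ‖(Complex.I*(s:ℂ))⁻¹ * ∫ v in (1/s)..2,
          Complex.exp ((s:ℂ)*v*Complex.I) *
          ((v ^ (a-1) * (a * φ v + v * deriv φ v) : ℝ) : ℂ)‖
        ≤ Cφ * s ^ (-(a+1)) + s⁻¹ * (Cφ * s ^ (-a) + Cd * (2 ^ (a+1) / (a+1))) := by
          refine add_le_add hB ?_
          rw [norm_mul, norm_Is_inv hs0]
          exact mul_le_mul_of_nonneg_left hJ (inv_nonneg.mpr hs0.le)
      _ = Cφ * s ^ (-(a+1)) + Cφ * (s ^ (-a) * s⁻¹) + (Cd * (2 ^ (a+1) / (a+1))) * s⁻¹ := by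
          ring
      _ ≤ Cφ * s ^ (-(a+1)) + Cφ * s ^ (-(a+1)) + (Cd * (2 ^ (a+1) / (a+1))) * s ^ (-(a+1)) := by
          rw [rpow_mul_inv_eq hs0]
          refine add_le_add le_rfl (mul_le_mul_of_nonneg_left hsle hK0)
      _ = (Cφ + (Cφ + Cd * (2 ^ (a+1) / (a+1)))) * s ^ (-(a+1)) := by ring
  | succ n ih =>
    intro a ha han φ hφ
    by_cases hcase : a ≤ n
    · exact ih a ha hcase φ hφ
    · push_neg at hcase
      have ha0 : 0 < a := lt_of_le_of_lt (Nat.cast_nonneg n) hcase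
      have han' : a - 1 ≤ n := by
        push_cast at han
        linarith
      obtain ⟨C, hC0, hC⟩ := ih (a-1) (by linarith) han'
        (fun v => a * φ v + v * deriv φ v) (hφ.psi a)
      obtain ⟨Cφ, hCφ0, hCφ⟩ := hφ.bound
      refine ⟨Cφ + C, by linarith, fun s hs => ?_⟩
      have hs0 : (0:ℝ) < s := lt_of_lt_of_le one_pos hs
      rw [ibp a hφ hs]
      refine le_trans (norm_sub_le _ _) ?_
      have hB := boundary_bound hs a hCφ0 hCφ
      have hJ := hC s hs
      have h2 : ‖(Complex.I*(s:ℂ))⁻¹ * ∫ v in (1/s)..2, Complex.exp ((s:ℂ)*v*Complex.I) *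
          ((v ^ (a-1) * (a * φ v + v * deriv φ v) : ℝ) : ℂ)‖ ≤ C * s ^ (-(a+1)) := by
        rw [norm_mul, norm_Is_inv hs0]
        calc s⁻¹ * ‖∫ v in (1/s)..2, Complex.exp ((s:ℂ)*v*Complex.I) *
            ((v ^ (a-1) * (a * φ v + v * deriv φ v) : ℝ) : ℂ)‖
            ≤ s⁻¹ * (C * s ^ (-(a-1+1))) := mul_le_mul_of_nonneg_left hJ (inv_nonneg.mpr hs0.le)
          _ = C * (s ^ (-(a-1+1)) * s⁻¹) := by ring
          _ = C * s ^ (-(a+1)) := by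
              have he : (-(a-1+1) : ℝ) = -a := by ring
              rw [he, rpow_mul_inv_eq hs0]
      linarith [hB, h2]

lemma key2 (a : ℝ) (ha : -1 < a) (φ : ℝ → ℝ) (hφ : Good φ) :
    ∃ C : ℝ, 0 ≤ C ∧ ∀ s : ℝ, 1 ≤ s →
      ‖∫ v in (0:ℝ)..2, Complex.exp ((s:ℂ)*v*Complex.I) * ((v ^ a * φ v : ℝ) : ℂ)‖
        ≤ C * s ^ (-(a+1)) := by
  obtain ⟨Cφ, hCφ0, hCφ⟩ := hφ.bound
  have hle : a ≤ (⌈a⌉₊ : ℝ) := Nat.le_ceil a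
  obtain ⟨C, hC0, hC⟩ := key ⌈a⌉₊ a ha hle φ hφ
  have ha1 : (0:ℝ) < a + 1 := by linarith
  refine ⟨Cφ / (a+1) + C, by positivity, fun s hs => ?_⟩
  have hs0 : (0:ℝ) < s := lt_of_lt_of_le one_pos hs
  have h1s0 : (0:ℝ) < 1/s := by positivity
  have h12 : (1/s : ℝ) ≤ 2 := by rw [div_le_iff₀ hs0]; linarith
  set f : ℝ → ℂ := fun v => Complex.exp ((s:ℂ)*v*Complex.I) * ((v ^ a * φ v : ℝ) : ℂ) with hf_def
  have hbound : ∀ v ∈ Ioc (0:ℝ) 2, ‖f v‖ ≤ Cφ * v ^ a := by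
    intro v hv
    have hv0 : 0 < v := hv.1
    rw [hf_def]
    simp only
    rw [norm_mul, norm_cexp_I, one_mul, Complex.norm_real, Real.norm_eq_abs, abs_mul,
      _root_.abs_of_nonneg (Real.rpow_nonneg hv0.le a), mul_comm Cφ _]
    exact mul_le_mul_of_nonneg_left (hCφ v ⟨hv0.le, hv.2⟩) (Real.rpow_nonneg hv0.le a)
  have hg_int : ∀ c d : ℝ, IntervalIntegrable (fun v : ℝ => Cφ * v ^ a) volume c d :=
    fun c d => (intervalIntegral.intervalIntegrable_rpow' ha).const_mul Cφ
  have hae : ∀ c d : ℝ, 0 ≤ c → c ≤ d → d ≤ 2 →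
      ∀ᵐ v ∂volume.restrict (Ι c d), ‖f v‖ ≤ Cφ * v ^ a := by
    intro c d hc hcd hd2
    refine (ae_restrict_iff' measurableSet_uIoc).mpr (ae_of_all _ ?_)
    intro v hv
    rw [uIoc_of_le hcd] at hv
    exact hbound v ⟨lt_of_le_of_lt hc hv.1, le_trans hv.2 hd2⟩
  have hf_int : ∀ c d : ℝ, 0 ≤ c → c ≤ d → d ≤ 2 → IntervalIntegrable f volume c d := by
    intro c d hc hcd hd2
    refine (hg_int c d).mono_fun' ?_ (hae c d hc hcd hd2)
    rw [uIoc_of_le hcd]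
    apply ContinuousOn.aestronglyMeasurable _ measurableSet_Ioc
    intro x hx
    have hx0 : x ≠ 0 := ne_of_gt (lt_of_le_of_lt hc hx.1)
    apply ContinuousWithinAt.mul
    · exact (Complex.continuous_exp.comp (by fun_prop)).continuousWithinAt
    · apply Complex.continuous_ofReal.continuousAt.comp_continuousWithinAt
      exact (((Real.continuousAt_rpow_const x a (Or.inl hx0)).mul
        hφ.1.continuous.continuousAt)).continuousWithinAt
  have hsplit : ∫ v in (0:ℝ)..2, f v = (∫ v in (0:ℝ)..(1/s), f v) + ∫ v in (1/s)..2, f v :=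
    (intervalIntegral.integral_add_adjacent_intervals
      (hf_int 0 (1/s) le_rfl h1s0.le h12) (hf_int (1/s) 2 h1s0.le h12 le_rfl)).symm
  have hsmall : ‖∫ v in (0:ℝ)..(1/s), f v‖ ≤ Cφ / (a+1) * s ^ (-(a+1)) := by
    refine le_trans (intervalIntegral.norm_integral_le_abs_of_norm_le
      (hae 0 (1/s) le_rfl h1s0.le h12) (hg_int 0 (1/s))) ?_
    have hval : ∫ v in (0:ℝ)..(1/s), Cφ * v ^ a = Cφ * (s ^ (-(a+1)) / (a+1)) := by
      rw [intervalIntegral.integral_const_mul, integral_rpow (Or.inl ha),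
        Real.zero_rpow (by linarith : a + 1 ≠ 0), sub_zero, rpow_inv_eq hs0 (a+1)]
    rw [hval, _root_.abs_of_nonneg (mul_nonneg hCφ0
      (div_nonneg (Real.rpow_nonneg hs0.le _) ha1.le))]
    apply le_of_eq
    ring
  have hlarge := hC s hs
  rw [hsplit]
  calc ‖(∫ v in (0:ℝ)..(1/s), f v) + ∫ v in (1/s)..2, f v‖
      ≤ ‖∫ v in (0:ℝ)..(1/s), f v‖ + ‖∫ v in (1/s)..2, f v‖ := norm_add_le _ _
    _ ≤ Cφ / (a+1) * s ^ (-(a+1)) + C * s ^ (-(a+1)) := add_le_add hsmall hlarge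
    _ = (Cφ / (a+1) + C) * s ^ (-(a+1)) := by ring

noncomputable def phi1 (k : ℝ) (u : ℝ) : ℝ := chi u * Real.exp (Real.log (2-u) * (k-1))

noncomputable def phi2 (k : ℝ) (v : ℝ) : ℝ := (1 - chi (2-v)) * Real.exp (Real.log (2-v) * k)

lemma contDiffAt_exp_log (c : ℝ) {x : ℝ} (hx : x < 2) :
    ContDiffAt ℝ ∞ (fun u : ℝ => Real.exp (Real.log (2-u) * c)) x := by
  apply ContDiffAt.exp
  apply ContDiffAt.mul _ contDiffAt_const
  have h2 : ContDiffAt ℝ ∞ (fun u : ℝ => 2 - u) x := by fun_prop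
  have hl : ContDiffAt ℝ ∞ Real.log (2 - x) := Real.contDiffAt_log.mpr (by linarith)
  exact hl.comp x h2

lemma good_phi1 (k : ℝ) : Good (phi1 k) := by
  constructor
  · rw [contDiff_iff_contDiffAt]
    intro x
    rcases lt_or_ge x 2 with hx | hx
    · exact (chi_contDiff.contDiffAt).mul (contDiffAt_exp_log (k-1) hx)
    · have hev : phi1 k =ᶠ[nhds x] (fun _ => 0) := by
        filter_upwards [Ioi_mem_nhds (show (1:ℝ) < x by linarith)] with y hy
        unfold phi1
        rw [chi_eq_zero (le_of_lt hy), zero_mul]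
      exact (contDiffAt_const (c := (0:ℝ))).congr_of_eventuallyEq hev
  · intro v hv
    unfold phi1
    rw [chi_eq_zero (by linarith), zero_mul]

lemma good_phi2 (k : ℝ) : Good (phi2 k) := by
  constructor
  · rw [contDiff_iff_contDiffAt]
    intro x
    rcases lt_or_ge x 2 with hx | hx
    · apply ContDiffAt.mul _ (contDiffAt_exp_log k hx)
      apply contDiffAt_const.sub
      exact (chi_contDiff.contDiffAt).comp x (by fun_prop)
    · have hev : phi2 k =ᶠ[nhds x] (fun _ => 0) := by
        filter_upwards [Ioi_mem_nhds (show (4/3:ℝ) < x by linarith)] with y hy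
        have hy' : (4/3:ℝ) < y := hy
        unfold phi2
        rw [chi_eq_one (by linarith : (2:ℝ) - y ≤ 2/3)]
        ring
      exact (contDiffAt_const (c := (0:ℝ))).congr_of_eventuallyEq hev
  · intro v hv
    unfold phi2
    rw [chi_eq_one (by linarith : (2:ℝ) - v ≤ 2/3)]
    ring

lemma intervalIntegral_conj {f : ℝ → ℂ} {a b : ℝ} :
    ∫ x in a..b, (starRingEnd ℂ) (f x) = (starRingEnd ℂ) (∫ x in a..b, f x) := by
  have h1 : ∫ x in a..b, (starRingEnd ℂ) (f x)
      = (∫ x in Ioc a b, (starRingEnd ℂ) (f x)) - ∫ x in Ioc b a, (starRingEnd ℂ) (f x) := rfl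
  have h2 : ∫ x in a..b, f x = (∫ x in Ioc a b, f x) - ∫ x in Ioc b a, f x := rfl
  rw [h1, h2, integral_conj, integral_conj, map_sub]

lemma int02 {E : ℝ → ℂ} (hE : Continuous E) (hE1 : ∀ v, ‖E v‖ = 1)
    (a : ℝ) (ha : -1 < a) {φ : ℝ → ℝ} (hφ : Good φ) :
    IntervalIntegrable (fun v => E v * ((v ^ a * φ v : ℝ) : ℂ)) volume 0 2 := by
  obtain ⟨Cφ, hCφ0, hCφ⟩ := hφ.bound
  have hg_int : IntervalIntegrable (fun v : ℝ => Cφ * v ^ a) volume 0 2 :=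
    (intervalIntegral.intervalIntegrable_rpow' ha).const_mul Cφ
  refine hg_int.mono_fun' ?_ ?_
  · rw [uIoc_of_le (by norm_num : (0:ℝ) ≤ 2)]
    apply ContinuousOn.aestronglyMeasurable _ measurableSet_Ioc
    intro x hx
    apply ContinuousWithinAt.mul hE.continuousWithinAt
    apply Complex.continuous_ofReal.continuousAt.comp_continuousWithinAt
    exact (((Real.continuousAt_rpow_const x a (Or.inl (ne_of_gt hx.1))).mul
      hφ.1.continuous.continuousAt)).continuousWithinAt
  · refine (ae_restrict_iff' measurableSet_uIoc).mpr (ae_of_all _ ?_)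
    intro v hv
    rw [uIoc_of_le (by norm_num : (0:ℝ) ≤ 2)] at hv
    simp only [norm_mul, hE1, one_mul, Complex.norm_real, Real.norm_eq_abs, abs_mul]
    rw [_root_.abs_of_nonneg (Real.rpow_nonneg hv.1.le a), mul_comm Cφ _]
    exact mul_le_mul_of_nonneg_left (hCφ v ⟨hv.1.le, hv.2⟩) (Real.rpow_nonneg hv.1.le a)

lemma main_bound (k : ℝ) (hk : 0 < k) : ∃ B : ℝ, 0 ≤ B ∧ ∀ s : ℝ, 0 < s →
    s ^ k * ‖∫ t in Icc (-1:ℝ) 1, Complex.exp ((t:ℂ) * (Complex.I * (s:ℂ))) *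
      (((1 - t) ^ (k - 1) * (1 + t) ^ k : ℝ) : ℂ)‖ ≤ B := by
  obtain ⟨C1, hC10, hC1⟩ := key2 k (by linarith) (phi1 k) (good_phi1 k)
  obtain ⟨C2, hC20, hC2⟩ := key2 (k-1) (by linarith) (phi2 k) (good_phi2 k)
  set W := ∫ t in Icc (-1:ℝ) 1, ((1-t)^(k-1) * (1+t)^k) with hW_def
  have hW0 : 0 ≤ W := by
    apply setIntegral_nonneg measurableSet_Icc
    intro t ht
    exact mul_nonneg (Real.rpow_nonneg (by linarith [ht.2]) _)
      (Real.rpow_nonneg (by linarith [ht.1]) _)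
  refine ⟨max W (C1 + C2), le_trans hW0 (le_max_left _ _), fun s hs0 => ?_⟩
  set f : ℝ → ℂ := fun t => Complex.exp ((t:ℂ) * (Complex.I * (s:ℂ))) *
      (((1 - t) ^ (k - 1) * (1 + t) ^ k : ℝ) : ℂ) with hf_def
  have hne : ∀ t : ℝ, ‖Complex.exp ((t:ℂ) * (Complex.I * (s:ℂ)))‖ = 1 := by
    intro t
    rw [show ((t:ℂ) * (Complex.I * (s:ℂ))) = (t:ℂ)*(s:ℂ)*Complex.I by ring]
    exact norm_cexp_I t s
  rcases le_or_gt s 1 with hs1 | hs1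
  · -- small s : trivial bound
    have h1 : ‖∫ t in Icc (-1:ℝ) 1, f t‖ ≤ W := by
      refine le_trans (norm_integral_le_integral_norm f) ?_
      rw [hW_def]
      apply le_of_eq
      apply setIntegral_congr_fun measurableSet_Icc
      intro t ht
      rw [hf_def]
      simp only
      rw [norm_mul, hne, one_mul, Complex.norm_real, Real.norm_eq_abs]
      exact _root_.abs_of_nonneg (mul_nonneg (Real.rpow_nonneg (by linarith [ht.2]) _)
        (Real.rpow_nonneg (by linarith [ht.1]) _))
    calc s ^ k * ‖∫ t in Icc (-1:ℝ) 1, f t‖ ≤ 1 * W := by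
          apply mul_le_mul (Real.rpow_le_one hs0.le hs1 hk.le) h1 (norm_nonneg _) zero_le_one
      _ = W := one_mul W
      _ ≤ max W (C1 + C2) := le_max_left _ _
  · -- large s
    have hs : 1 ≤ s := hs1.le
    set P1int : ℝ → ℂ := fun u => Complex.exp ((s:ℂ)*u*Complex.I) *
        ((u ^ k * phi1 k u : ℝ):ℂ) with hP1_def
    set P2int : ℝ → ℂ := fun u => Complex.exp ((s:ℂ)*u*Complex.I) *
        ((u ^ k * ((2-u) ^ (k-1) * (1 - chi u)) : ℝ):ℂ) with hP2_def
    set Q : ℝ → ℂ := fun v => Complex.exp (-((s:ℂ)*v*Complex.I)) *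
        ((v ^ (k-1) * phi2 k v : ℝ):ℂ) with hQ_def
    set R : ℝ → ℂ := fun v => Complex.exp ((s:ℂ)*v*Complex.I) *
        ((v ^ (k-1) * phi2 k v : ℝ):ℂ) with hR_def
    -- step A/B : to interval integral on [0,2]
    have hA : ∫ t in Icc (-1:ℝ) 1, f t = ∫ t in (-1:ℝ)..1, f t := by
      rw [intervalIntegral.integral_of_le (by norm_num : (-1:ℝ) ≤ 1),
        integral_Icc_eq_integral_Ioc]
    have hB : ∫ t in (-1:ℝ)..1, f t = ∫ u in (0:ℝ)..2, f (u - 1) := by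
      rw [intervalIntegral.integral_comp_sub_right f 1]
      norm_num
    -- step C : pointwise form on [0,2]
    have hCpt : ∀ u : ℝ, f (u-1) = Complex.exp (-(Complex.I*(s:ℂ))) *
        (Complex.exp ((s:ℂ)*u*Complex.I) * ((u ^ k * ((2-u) ^ (k-1)) : ℝ) : ℂ)) := by
      intro u
      rw [hf_def]
      simp only
      rw [show (1:ℝ) - (u-1) = 2 - u by ring, show (1:ℝ) + (u-1) = u by ring]
      rw [show (((u-1:ℝ)):ℂ) * (Complex.I*(s:ℂ))
          = -(Complex.I*(s:ℂ)) + (s:ℂ)*u*Complex.I by push_cast; ring]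
      rw [Complex.exp_add]
      push_cast
      ring
    -- step D : decomposition of the weight
    have hD : ∀ u : ℝ, Complex.exp ((s:ℂ)*u*Complex.I) * ((u ^ k * ((2-u) ^ (k-1)) : ℝ):ℂ)
        = P1int u + P2int u := by
      intro u
      have hreal : u ^ k * ((2-u) ^ (k-1)) = u ^ k * phi1 k u
          + u ^ k * ((2-u) ^ (k-1) * (1 - chi u)) := by
        rcases lt_or_ge u 2 with hu | hu
        · have hphi : phi1 k u = chi u * (2-u)^(k-1) := by
            unfold phi1
            rw [← Real.rpow_def_of_pos (by linarith : 0 < 2 - u)]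
          rw [hphi]; ring
        · have hphi : phi1 k u = 0 := by
            unfold phi1
            rw [chi_eq_zero (by linarith), zero_mul]
          rw [hphi, chi_eq_zero (by linarith : (1:ℝ) ≤ u)]; ring
      rw [hP1_def, hP2_def]
      simp only
      rw [← mul_add, ← Complex.ofReal_add, ← hreal]
    -- integrability
    have hEcont : Continuous (fun v : ℝ => Complex.exp ((s:ℂ)*v*Complex.I)) :=
      Complex.continuous_exp.comp (by fun_prop)
    have hEcont' : Continuous (fun v : ℝ => Complex.exp (-((s:ℂ)*v*Complex.I))) :=
      Complex.continuous_exp.comp (by fun_prop)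
    have hEnorm : ∀ v : ℝ, ‖Complex.exp ((s:ℂ)*v*Complex.I)‖ = 1 := fun v => norm_cexp_I s v
    have hEnorm' : ∀ v : ℝ, ‖Complex.exp (-((s:ℂ)*v*Complex.I))‖ = 1 := by
      intro v
      rw [show -((s:ℂ)*v*Complex.I) = (s:ℂ)*((-v:ℝ):ℂ)*Complex.I by push_cast; ring]
      exact norm_cexp_I s (-v)
    have hint1 : IntervalIntegrable P1int volume 0 2 :=
      int02 hEcont hEnorm k (by linarith) (good_phi1 k)
    have hQint : IntervalIntegrable Q volume 0 2 :=
      int02 hEcont' hEnorm' (k-1) (by linarith) (good_phi2 k)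
    -- P2 via reflection
    have hP2eq : ∀ u : ℝ, P2int u = Complex.exp ((s:ℂ)*2*Complex.I) * Q (2 - u) := by
      intro u
      rw [hP2_def, hQ_def]
      simp only
      unfold phi2
      rw [show (2:ℝ) - (2 - u) = u by ring]
      rw [show -((s:ℂ)*((2-u:ℝ):ℂ)*Complex.I) = (s:ℂ)*u*Complex.I - (s:ℂ)*2*Complex.I
        by push_cast; ring]
      rcases le_or_gt u (2/3) with hu | hu
      · rw [chi_eq_one hu]
        push_cast
        ring
      · rw [← Real.rpow_def_of_pos (by linarith : (0:ℝ) < u)]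
        rw [Complex.exp_sub]
        push_cast
        field_simp [Complex.exp_ne_zero]
    have hQ2int : IntervalIntegrable (fun u => Q (2 - u)) volume 0 2 := by
      have h := (hQint.comp_sub_left 2).symm
      norm_num at h
      exact h
    have hint2 : IntervalIntegrable P2int volume 0 2 := by
      have hfun : P2int = fun u => Complex.exp ((s:ℂ)*2*Complex.I) * Q (2 - u) :=
        funext hP2eq
      rw [hfun]
      exact hQ2int.const_mul _
    -- split
    have hsplit : ∫ u in (0:ℝ)..2, Complex.exp ((s:ℂ)*u*Complex.I) *
        ((u ^ k * ((2-u) ^ (k-1)) : ℝ):ℂ) = (∫ u in (0:ℝ)..2, P1int u)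
          + ∫ u in (0:ℝ)..2, P2int u := by
      rw [intervalIntegral.integral_congr (fun u _ => hD u)]
      exact intervalIntegral.integral_add hint1 hint2
    -- bound P1
    have hP1bd : ‖∫ u in (0:ℝ)..2, P1int u‖ ≤ C1 * s ^ (-k) := by
      refine le_trans (hC1 s hs) ?_
      exact mul_le_mul_of_nonneg_left
        (Real.rpow_le_rpow_of_exponent_le hs (by linarith)) hC10
    -- bound P2
    have hQR : ∀ v : ℝ, Q v = (starRingEnd ℂ) (R v) := by
      intro v
      rw [hQ_def, hR_def]
      simp only
      rw [map_mul, ← Complex.exp_conj, Complex.conj_ofReal]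
      congr 2
      simp [map_mul, Complex.conj_I, Complex.conj_ofReal]
    have hP2bd : ‖∫ u in (0:ℝ)..2, P2int u‖ ≤ C2 * s ^ (-k) := by
      have e1 : ∫ u in (0:ℝ)..2, P2int u
          = Complex.exp ((s:ℂ)*2*Complex.I) * ∫ u in (0:ℝ)..2, Q (2 - u) := by
        rw [intervalIntegral.integral_congr (fun u _ => hP2eq u)]
        exact intervalIntegral.integral_const_mul _ _
      have e2 : ∫ u in (0:ℝ)..2, Q (2 - u) = ∫ v in (0:ℝ)..2, Q v := by
        rw [intervalIntegral.integral_comp_sub_left Q 2]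
        norm_num
      have e3 : ∫ v in (0:ℝ)..2, Q v = (starRingEnd ℂ) (∫ v in (0:ℝ)..2, R v) := by
        rw [intervalIntegral.integral_congr (fun v _ => hQR v)]
        exact intervalIntegral_conj
      have hn2 : ‖Complex.exp ((s:ℂ)*2*Complex.I)‖ = 1 := by
        rw [show (s:ℂ)*2*Complex.I = (s:ℂ)*((2:ℝ):ℂ)*Complex.I by norm_num]
        exact norm_cexp_I s 2
      rw [e1, norm_mul, hn2, one_mul, e2, e3, RCLike.norm_conj]
      have := hC2 s hs
      rw [show -((k-1)+1) = -k by ring] at this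
      exact this
    -- total for large s
    have htot : ‖∫ t in Icc (-1:ℝ) 1, f t‖ ≤ (C1 + C2) * s ^ (-k) := by
      rw [hA, hB, intervalIntegral.integral_congr (fun u _ => hCpt u),
        intervalIntegral.integral_const_mul, norm_mul]
      have hn1 : ‖Complex.exp (-(Complex.I*(s:ℂ)))‖ = 1 := by
        rw [show -(Complex.I*(s:ℂ)) = (s:ℂ)*((-1:ℝ):ℂ)*Complex.I by push_cast; ring]
        exact norm_cexp_I s (-1)
      rw [hn1, one_mul, hsplit]
      calc ‖(∫ u in (0:ℝ)..2, P1int u) + ∫ u in (0:ℝ)..2, P2int u‖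
          ≤ ‖∫ u in (0:ℝ)..2, P1int u‖ + ‖∫ u in (0:ℝ)..2, P2int u‖ := norm_add_le _ _
        _ ≤ C1 * s ^ (-k) + C2 * s ^ (-k) := add_le_add hP1bd hP2bd
        _ = (C1 + C2) * s ^ (-k) := by ring
    calc s ^ k * ‖∫ t in Icc (-1:ℝ) 1, f t‖ ≤ s ^ k * ((C1 + C2) * s ^ (-k)) :=
          mul_le_mul_of_nonneg_left htot (Real.rpow_nonneg hs0.le k)
      _ = (C1 + C2) * (s ^ k * s ^ (-k)) := by ring
      _ = C1 + C2 := by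
          rw [← Real.rpow_add hs0]
          simp
      _ ≤ max W (C1 + C2) := le_max_right _ _

end DunklAux

/-- Uniform bound: `s^{2k} |D_k(is)|²` is bounded on `(0,∞)`. -/
theorem dunkl_stmt14 (k : ℝ) (hk : 0 < k) :
    ∃ M : ℝ, 0 < M ∧ ∀ s : ℝ, 0 < s →
      s ^ (2 * k) * ‖Dk k (Complex.I * (s : ℂ))‖ ^ 2 ≤ M := by
  obtain ⟨B, hB0, hB⟩ := DunklAux.main_bound k hk
  set c : ℝ := Real.Gamma (k + 1/2) / (Real.Gamma (1/2) * Real.Gamma k) with hc_def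
  have hc : 0 < c :=
    div_pos (Real.Gamma_pos_of_pos (by linarith))
      (mul_pos (Real.Gamma_pos_of_pos (by norm_num)) (Real.Gamma_pos_of_pos hk))
  refine ⟨(c * B) ^ 2 + 1, by positivity, fun s hs0 => ?_⟩
  have hDk : ‖Dk k (Complex.I * (s:ℂ))‖
      = c * ‖∫ t in Icc (-1:ℝ) 1, Complex.exp ((t:ℂ) * (Complex.I * (s:ℂ))) *
          (((1 - t) ^ (k - 1) * (1 + t) ^ k : ℝ) : ℂ)‖ := by
    rw [Dk, norm_mul, Complex.norm_real, Real.norm_eq_abs, _root_.abs_of_pos hc]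
  have hkey := hB s hs0
  set N : ℝ := ‖∫ t in Icc (-1:ℝ) 1, Complex.exp ((t:ℂ) * (Complex.I * (s:ℂ))) *
      (((1 - t) ^ (k - 1) * (1 + t) ^ k : ℝ) : ℂ)‖ with hN_def
  have hN0 : 0 ≤ N := norm_nonneg _
  have h2k : s ^ (2*k) = (s ^ k) ^ 2 := by
    rw [two_mul, Real.rpow_add hs0, sq]
  rw [hDk, h2k]
  have heq : (s ^ k) ^ 2 * (c * N) ^ 2 = (c * (s ^ k * N)) ^ 2 := by ring
  rw [heq]
  have hle : c * (s ^ k * N) ≤ c * B := mul_le_mul_of_nonneg_left hkey hc.le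
  have hnn : 0 ≤ c * (s ^ k * N) := by positivity
  nlinarith [sq_nonneg (c * (s ^ k * N)), sq_nonneg (c*B)]
end

section
/- Let N ≥ 1, let R₊ ⊂ ℝᴺ be a finite nonempty set of nonzero vectors, let k : R₊ → [0,∞) with γ := Σ_{α∈R₊} k(α) > 0, and let w_k(ξ) = Π_{α∈R₊} |⟨α,ξ⟩|^{2k(α)}. Let C = {ξ ∈ ℝᴺ : ⟨α,ξ⟩ > 0 for all α ∈ R₊} and, for δ > 0, C_δ = {ξ ∈ C : ⟨α,ξ⟩ > δ|ξ| for all α ∈ R₊}. Suppose f : ℝᴺ → ℂ is measurable with |f(ξ)| ≤ 1 for all ξ, and for every δ > 0 there is a constant M_δ > 0 such that |f(ξ)|² ≤ M_δ / w_k(ξ) for all ξ ∈ C_δ with |ξ| ≥ 1. Then lim_{n→∞} n^{−N} ∫_{{ξ ∈ C : 1 ≤ |ξ| ≤ n}} |f(ξ)|² dξ = 0, where the integral is with respect to Lebesgue measure on ℝᴺ. -/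
open MeasureTheory Filter Set Pointwise

section Aux

variable {N : ℕ}

/-- The "bad cone" near the walls of the chamber. -/
def coneBad (R : Finset (EuclideanSpace ℝ (Fin N))) (δ : ℝ) :
    Set (EuclideanSpace ℝ (Fin N)) :=
  {x | ∃ α ∈ R, |(inner ℝ α x : ℝ)| ≤ δ * ‖x‖}

lemma coneBad_closed (R : Finset (EuclideanSpace ℝ (Fin N))) (δ : ℝ) :
    IsClosed (coneBad R δ) := by
  have h : coneBad R δ =
      ⋃ α ∈ R, {x : EuclideanSpace ℝ (Fin N) | |(inner ℝ α x : ℝ)| ≤ δ * ‖x‖} := by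
    ext x; simp [coneBad]
  rw [h]
  refine R.finite_toSet.isClosed_biUnion fun α _ => ?_
  exact isClosed_le ((continuous_const.inner continuous_id).abs)
    (continuous_const.mul continuous_norm)

lemma coneBad_null (R : Finset (EuclideanSpace ℝ (Fin N)))
    (hR0 : ∀ α ∈ R, α ≠ 0) :
    volume (⋂ m : ℕ, coneBad R (1 / (m + 1)) ∩ Metric.closedBall 0 1) = 0 := by
  have hsub : (⋂ m : ℕ, coneBad R (1 / (m + 1)) ∩ Metric.closedBall 0 1) ⊆
      ⋃ α ∈ (R : Set (EuclideanSpace ℝ (Fin N))), {x : EuclideanSpace ℝ (Fin N) | (inner ℝ α x : ℝ) = 0} := by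
    intro x hx
    simp only [mem_iInter, mem_inter_iff, coneBad, mem_setOf_eq] at hx
    obtain ⟨α0, hα0, _⟩ := (hx 0).1
    have hRne : R.Nonempty := ⟨α0, hα0⟩
    set c := R.inf' hRne (fun α => |(inner ℝ α x : ℝ)|) with hc
    have hc0 : 0 ≤ c := Finset.le_inf' _ _ fun α _ => abs_nonneg _
    have hcle : ∀ m : ℕ, c ≤ (1 / ((m : ℝ) + 1)) * ‖x‖ := by
      intro m
      obtain ⟨α, hα, hle⟩ := (hx m).1
      exact (Finset.inf'_le _ hα).trans hle
    have hlim : Tendsto (fun m : ℕ => (1 / ((m : ℝ) + 1)) * ‖x‖) atTop (nhds 0) := by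
      have := tendsto_one_div_add_atTop_nhds_zero_nat.mul_const ‖x‖
      simpa using this
    have hcz : c ≤ 0 := ge_of_tendsto' hlim hcle
    have hceq : c = 0 := le_antisymm hcz hc0
    obtain ⟨α, hα, hval⟩ := Finset.exists_mem_eq_inf' hRne (fun α => |(inner ℝ α x : ℝ)|)
    have : |(inner ℝ α x : ℝ)| = 0 := by rw [← hval, ← hc, hceq]
    refine mem_iUnion₂.2 ⟨α, Finset.mem_coe.2 hα, ?_⟩
    simpa [abs_eq_zero] using this
  refine measure_mono_null hsub ?_
  · rw [measure_biUnion_null_iff R.countable_toSet]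
    intro α hα
    replace hα : α ∈ R := hα
    have hker : {x : EuclideanSpace ℝ (Fin N) | (inner ℝ α x : ℝ) = 0}
        = (LinearMap.ker (innerSL ℝ α).toLinearMap : Set (EuclideanSpace ℝ (Fin N))) := by
      ext x
      simp [LinearMap.mem_ker]
    rw [hker]
    apply Measure.addHaar_submodule
    intro htop
    have hmem : α ∈ LinearMap.ker (innerSL ℝ α).toLinearMap := by
      rw [htop]; trivial
    have : (inner ℝ α α : ℝ) = 0 := by simpa using hmem
    exact hR0 α hα (by simpa using inner_self_eq_zero.1 this)

lemma coneBad_scale (R : Finset (EuclideanSpace ℝ (Fin N))) (δ : ℝ) {r : ℝ} (hr : 0 < r) :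
    volume (coneBad R δ ∩ Metric.closedBall (0 : EuclideanSpace ℝ (Fin N)) r)
      = ENNReal.ofReal (r ^ N) *
        volume (coneBad R δ ∩ Metric.closedBall (0 : EuclideanSpace ℝ (Fin N)) 1) := by
  have hset : coneBad R δ ∩ Metric.closedBall (0 : EuclideanSpace ℝ (Fin N)) r
      = r • (coneBad R δ ∩ Metric.closedBall (0 : EuclideanSpace ℝ (Fin N)) 1) := by
    ext x
    rw [mem_smul_set_iff_inv_smul_mem₀ hr.ne']
    simp only [coneBad, mem_inter_iff, mem_setOf_eq, Metric.mem_closedBall, dist_zero_right,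
      real_inner_smul_right, norm_smul, norm_inv, Real.norm_eq_abs, abs_of_pos hr]
    have hrinv : (0 : ℝ) < r⁻¹ := inv_pos.2 hr
    constructor
    · rintro ⟨⟨α, hα, h1⟩, h2⟩
      refine ⟨⟨α, hα, ?_⟩, ?_⟩
      · rw [abs_mul, abs_of_pos hrinv]
        calc r⁻¹ * |(inner ℝ α x : ℝ)| ≤ r⁻¹ * (δ * ‖x‖) := by
              exact mul_le_mul_of_nonneg_left h1 hrinv.le
          _ = δ * (r⁻¹ * ‖x‖) := by ring
      · rw [inv_mul_le_one₀ hr]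
        exact h2
    · rintro ⟨⟨α, hα, h1⟩, h2⟩
      rw [abs_mul, abs_of_pos hrinv] at h1
      refine ⟨⟨α, hα, ?_⟩, ?_⟩
      · have := mul_le_mul_of_nonneg_left h1 hr.le
        calc |(inner ℝ α x : ℝ)| = r * (r⁻¹ * |(inner ℝ α x : ℝ)|) := by
              field_simp
          _ ≤ r * (δ * (r⁻¹ * ‖x‖)) := mul_le_mul_of_nonneg_left h1 hr.le
          _ = δ * ‖x‖ := by field_simp
      · have := mul_le_mul_of_nonneg_left h2 hr.le
        calc ‖x‖ = r * (r⁻¹ * ‖x‖) := by field_simp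
          _ ≤ r * 1 := mul_le_mul_of_nonneg_left h2 hr.le
          _ = r := mul_one r
  rw [hset, Measure.addHaar_smul_of_nonneg volume hr.le, finrank_euclideanSpace_fin]

lemma my_setIntegral_union_le {X : Type*} [MeasurableSpace X] {μ : Measure X}
    {g : X → ℝ} (hg : ∀ x, 0 ≤ g x) {A B : Set X} (hAm : MeasurableSet A)
    (hBm : MeasurableSet B)
    (hA : IntegrableOn g A μ) (hB : IntegrableOn g B μ) :
    ∫ x in A ∪ B, g x ∂μ ≤ (∫ x in A, g x ∂μ) + ∫ x in B, g x ∂μ := by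
  have h1 : A ∪ B = A ∪ (B \ A) := by rw [union_diff_self]
  rw [h1, setIntegral_union disjoint_sdiff_right (hBm.diff hAm) hA (hB.mono_set diff_subset)]
  refine add_le_add_right ?_ _
  exact setIntegral_mono_set hB (ae_of_all _ hg)
    (HasSubset.Subset.eventuallyLE diff_subset)

end Aux

set_option maxHeartbeats 1000000 in
/-- Wiener-type Cesàro decay over a Weyl chamber: if `f` is bounded by `1` and satisfies
`|f(ξ)|² ≤ M_δ / w_k(ξ)` on each truncated cone `C_δ` (for `|ξ| ≥ 1`), where the weight
`w_k` has positive total index `γ = Σ k(α) > 0`, then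
`n^{-N} ∫_{ξ ∈ C, 1 ≤ |ξ| ≤ n} |f(ξ)|² dξ → 0`. -/
theorem dunkl_stmt16 (N : ℕ) (hN : 1 ≤ N)
    (R : Finset (EuclideanSpace ℝ (Fin N))) (hR : R.Nonempty)
    (hR0 : ∀ α ∈ R, α ≠ 0)
    (k : EuclideanSpace ℝ (Fin N) → ℝ) (hk : ∀ α ∈ R, 0 ≤ k α)
    (hγ : 0 < ∑ α ∈ R, k α)
    (f : EuclideanSpace ℝ (Fin N) → ℂ) (hfm : Measurable f)
    (hf1 : ∀ ξ, ‖f ξ‖ ≤ 1)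
    (hbound : ∀ δ : ℝ, 0 < δ → ∃ M : ℝ, 0 < M ∧
      ∀ ξ : EuclideanSpace ℝ (Fin N),
        (∀ α ∈ R, 0 < (inner ℝ α ξ : ℝ)) → (∀ α ∈ R, δ * ‖ξ‖ < (inner ℝ α ξ : ℝ)) →
          1 ≤ ‖ξ‖ →
          ‖f ξ‖ ^ 2 ≤ M / ∏ α ∈ R, |(inner ℝ α ξ : ℝ)| ^ (2 * k α)) :
    Tendsto (fun n : ℕ => (1 / (n : ℝ) ^ N) *
        ∫ ξ in {ξ : EuclideanSpace ℝ (Fin N) |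
          (∀ α ∈ R, 0 < (inner ℝ α ξ : ℝ)) ∧ 1 ≤ ‖ξ‖ ∧ ‖ξ‖ ≤ (n : ℝ)},
          ‖f ξ‖ ^ 2)
      atTop (nhds 0) := by
  classical
  set γs := ∑ α ∈ R, k α with hγs
  have hvol1 : volume (Metric.closedBall (0 : EuclideanSpace ℝ (Fin N)) 1) ≠ ⊤ :=
    measure_closedBall_lt_top.ne
  set ω := (volume (Metric.closedBall (0 : EuclideanSpace ℝ (Fin N)) 1)).toReal with hω
  have hω0 : 0 ≤ ω := ENNReal.toReal_nonneg
  rw [NormedAddCommGroup.tendsto_nhds_zero]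
  intro ε hε
  -- choose δ
  have hmeas : ∀ m : ℕ, NullMeasurableSet
      (coneBad R (1 / (m + 1)) ∩ Metric.closedBall (0 : EuclideanSpace ℝ (Fin N)) 1) volume :=
    fun m => (((coneBad_closed R _).inter Metric.isClosed_closedBall).measurableSet).nullMeasurableSet
  have hanti : Antitone (fun m : ℕ =>
      coneBad R (1 / (m + 1)) ∩ Metric.closedBall (0 : EuclideanSpace ℝ (Fin N)) 1) := by
    intro m m' hmm'
    apply inter_subset_inter_left
    rintro x ⟨α, hα, hle⟩
    refine ⟨α, hα, hle.trans (mul_le_mul_of_nonneg_right ?_ (norm_nonneg x))⟩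
    refine one_div_le_one_div_of_le (by positivity) ?_
    have : (m : ℝ) ≤ (m' : ℝ) := by exact_mod_cast hmm'
    linarith
  have htend := tendsto_measure_iInter_atTop hmeas hanti
      ⟨0, ((measure_mono inter_subset_right).trans_lt measure_closedBall_lt_top).ne⟩
  rw [coneBad_null R hR0] at htend
  have htoReal : Tendsto (fun m : ℕ =>
      (volume (coneBad R (1 / (m + 1)) ∩
        Metric.closedBall (0 : EuclideanSpace ℝ (Fin N)) 1)).toReal)
      atTop (nhds 0) := by
    have := (ENNReal.tendsto_toReal (by simp)).comp htend
    simpa [Function.comp_def] using this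
  obtain ⟨m, hm⟩ := (htoReal.eventually_lt_const (by positivity : (0:ℝ) < ε/2)).exists
  set δ : ℝ := 1 / ((m : ℝ) + 1) with hδdef
  have hδ : 0 < δ := by positivity
  set sδ := (volume (coneBad R δ ∩
      Metric.closedBall (0 : EuclideanSpace ℝ (Fin N)) 1)).toReal with hsδdef
  obtain ⟨M, hM, hMf⟩ := hbound δ hδ
  -- tendsto facts
  have hsq : Tendsto (fun n : ℕ => Real.sqrt n) atTop atTop := by
    have h1 : Tendsto (fun x : ℝ => x ^ (1/2 : ℝ)) atTop atTop :=
      tendsto_rpow_atTop (by norm_num)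
    have h2 := h1.comp tendsto_natCast_atTop_atTop
    refine h2.congr fun n => ?_
    simp [Function.comp, Real.sqrt_eq_rpow]
  have hA : Tendsto (fun n : ℕ => ω / Real.sqrt n) atTop (nhds 0) :=
    tendsto_const_nhds.div_atTop hsq
  have hB : Tendsto (fun n : ℕ => ω * (M / (δ * Real.sqrt n) ^ (2 * γs))) atTop (nhds 0) := by
    have hpow : Tendsto (fun n : ℕ => (δ * Real.sqrt n) ^ (2 * γs)) atTop atTop :=
      (tendsto_rpow_atTop (by positivity)).comp (hsq.const_mul_atTop hδ)
    have hdiv : Tendsto (fun n : ℕ => M / (δ * Real.sqrt n) ^ (2 * γs)) atTop (nhds 0) :=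
      Tendsto.div_atTop (tendsto_const_nhds : Tendsto (fun _ : ℕ => M) atTop (nhds M)) hpow
    have := hdiv.const_mul ω
    simpa using this
  have hev1 := hA.eventually_lt_const (show (0:ℝ) < ε/4 by positivity)
  have hev2 := hB.eventually_lt_const (show (0:ℝ) < ε/4 by positivity)
  filter_upwards [hev1, hev2, eventually_ge_atTop 1] with n hn1 hn2 hn
  have hn1' : (1:ℝ) ≤ (n:ℝ) := by exact_mod_cast hn
  have hnpos : (0:ℝ) < (n:ℝ) := by linarith
  set r := Real.sqrt (n : ℝ) with hrdef
  have hrpos : (0:ℝ) < r := Real.sqrt_pos.2 hnpos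
  have hr1 : (1:ℝ) ≤ r := by rw [hrdef]; exact Real.one_le_sqrt.2 hn1'
  have hrr : r * r = (n:ℝ) := Real.mul_self_sqrt hnpos.le
  have hrn : r ≤ (n:ℝ) := by nlinarith
  set g : EuclideanSpace ℝ (Fin N) → ℝ := fun ξ => ‖f ξ‖ ^ 2 with hgdef
  have hg0 : ∀ ξ, 0 ≤ g ξ := fun ξ => sq_nonneg _
  have hg1 : ∀ ξ, g ξ ≤ 1 := fun ξ => by
    have := hf1 ξ
    have h0 := norm_nonneg (f ξ)
    simp only [hgdef]
    nlinarith
  have hgm : Measurable g := hfm.norm.pow_const 2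
  have hint : ∀ s : Set (EuclideanSpace ℝ (Fin N)), volume s ≠ ⊤ → IntegrableOn g s volume :=
    fun s hs => Measure.integrableOn_of_bounded hs hgm.aestronglyMeasurable
      (ae_of_all _ fun x => by rw [Real.norm_eq_abs, abs_of_nonneg (hg0 x)]; exact hg1 x)
  set D := {ξ : EuclideanSpace ℝ (Fin N) |
      (∀ α ∈ R, 0 < (inner ℝ α ξ : ℝ)) ∧ 1 ≤ ‖ξ‖ ∧ ‖ξ‖ ≤ (n : ℝ)} with hDdef
  set E1 := Metric.closedBall (0 : EuclideanSpace ℝ (Fin N)) r with hE1def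
  set E2 := D ∩ {ξ : EuclideanSpace ℝ (Fin N) |
      (∀ α ∈ R, δ * ‖ξ‖ < (inner ℝ α ξ : ℝ)) ∧ r ≤ ‖ξ‖} with hE2def
  set F := coneBad R δ ∩ Metric.closedBall (0 : EuclideanSpace ℝ (Fin N)) (n : ℝ) with hFdef
  have hinnerm : ∀ α : EuclideanSpace ℝ (Fin N), Measurable fun ξ => (inner ℝ α ξ : ℝ) :=
    fun α => (continuous_const.inner continuous_id).measurable
  have hDm : MeasurableSet D := by
    have heq : D = (⋂ α ∈ (R : Set (EuclideanSpace ℝ (Fin N))),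
        {ξ : EuclideanSpace ℝ (Fin N) | 0 < (inner ℝ α ξ : ℝ)}) ∩
        ({ξ : EuclideanSpace ℝ (Fin N) | 1 ≤ ‖ξ‖} ∩
          {ξ : EuclideanSpace ℝ (Fin N) | ‖ξ‖ ≤ (n:ℝ)}) := by
      ext ξ
      simp only [hDdef, mem_setOf_eq, mem_inter_iff, mem_iInter, Finset.mem_coe]
      try tauto
    rw [heq]
    refine (MeasurableSet.biInter R.countable_toSet fun α _ =>
        measurableSet_lt measurable_const (hinnerm α)).inter
      ((measurableSet_le measurable_const measurable_norm).inter
        (measurableSet_le measurable_norm measurable_const))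
  have hE2m : MeasurableSet E2 := by
    have hq : {ξ : EuclideanSpace ℝ (Fin N) |
        (∀ α ∈ R, δ * ‖ξ‖ < (inner ℝ α ξ : ℝ)) ∧ r ≤ ‖ξ‖} =
        (⋂ α ∈ (R : Set (EuclideanSpace ℝ (Fin N))),
          {ξ : EuclideanSpace ℝ (Fin N) | δ * ‖ξ‖ < (inner ℝ α ξ : ℝ)}) ∩
          {ξ : EuclideanSpace ℝ (Fin N) | r ≤ ‖ξ‖} := by
      ext ξ
      simp only [mem_setOf_eq, mem_inter_iff, mem_iInter, Finset.mem_coe]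
      try tauto
    rw [hE2def, hq]
    exact hDm.inter ((MeasurableSet.biInter R.countable_toSet fun α _ =>
      measurableSet_lt (measurable_const.mul measurable_norm) (hinnerm α)).inter
      (measurableSet_le measurable_const measurable_norm))
  have hFm : MeasurableSet F := ((coneBad_closed R δ).inter Metric.isClosed_closedBall).measurableSet
  have hE1m : MeasurableSet E1 := measurableSet_closedBall
  have hballn : volume (Metric.closedBall (0 : EuclideanSpace ℝ (Fin N)) (n:ℝ)) ≠ ⊤ :=
    measure_closedBall_lt_top.ne
  have hDsub : D ⊆ Metric.closedBall (0 : EuclideanSpace ℝ (Fin N)) (n:ℝ) := by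
    intro ξ hξ
    rw [Metric.mem_closedBall, dist_zero_right]
    exact hξ.2.2
  have hE2sub : E2 ⊆ Metric.closedBall (0 : EuclideanSpace ℝ (Fin N)) (n:ℝ) :=
    fun ξ hξ => hDsub hξ.1
  have hFsub : F ⊆ Metric.closedBall (0 : EuclideanSpace ℝ (Fin N)) (n:ℝ) := inter_subset_right
  have hIball : IntegrableOn g (Metric.closedBall (0 : EuclideanSpace ℝ (Fin N)) (n:ℝ)) volume :=
    hint _ hballn
  have hIE1 : IntegrableOn g E1 volume := hint _ measure_closedBall_lt_top.ne
  have hIE2 : IntegrableOn g E2 volume := hIball.mono_set hE2sub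
  have hIF : IntegrableOn g F volume := hIball.mono_set hFsub
  have hID : IntegrableOn g D volume := hIball.mono_set hDsub
  have hcover : D ⊆ E1 ∪ (E2 ∪ F) := by
    intro ξ hξ
    obtain ⟨hpos, h1ξ, hξn⟩ := hξ
    by_cases hcase : ‖ξ‖ ≤ r
    · exact Or.inl (by rw [hE1def, Metric.mem_closedBall, dist_zero_right]; exact hcase)
    · push_neg at hcase
      by_cases hcase2 : ∀ α ∈ R, δ * ‖ξ‖ < (inner ℝ α ξ : ℝ)
      · exact Or.inr (Or.inl ⟨⟨hpos, h1ξ, hξn⟩, hcase2, hcase.le⟩)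
      · push_neg at hcase2
        obtain ⟨α, hα, hle⟩ := hcase2
        refine Or.inr (Or.inr ⟨⟨α, hα, ?_⟩, ?_⟩)
        · rw [abs_of_pos (hpos α hα)]
          exact hle
        · rw [Metric.mem_closedBall, dist_zero_right]
          exact hξn
  have hstep1 : ∫ ξ in D, g ξ ≤ ∫ ξ in E1 ∪ (E2 ∪ F), g ξ :=
    setIntegral_mono_set (hIE1.union (hIE2.union hIF)) (ae_of_all _ hg0)
      (HasSubset.Subset.eventuallyLE hcover)
  have hstep2 : ∫ ξ in E1 ∪ (E2 ∪ F), g ξ ≤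
      (∫ ξ in E1, g ξ) + ((∫ ξ in E2, g ξ) + ∫ ξ in F, g ξ) := by
    refine (my_setIntegral_union_le hg0 hE1m (hE2m.union hFm) hIE1 (hIE2.union hIF)).trans ?_
    exact add_le_add_right (my_setIntegral_union_le hg0 hE2m hFm hIE2 hIF) _
  have hvolE1 : (volume E1).toReal = r ^ N * ω := by
    rw [hE1def, Measure.addHaar_closedBall' volume _ hrpos.le, finrank_euclideanSpace_fin,
      ENNReal.toReal_mul, ENNReal.toReal_ofReal (by positivity)]
  have hvolball : (volume (Metric.closedBall (0 : EuclideanSpace ℝ (Fin N)) (n:ℝ))).toReal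
      = (n:ℝ) ^ N * ω := by
    rw [Measure.addHaar_closedBall' volume _ hnpos.le, finrank_euclideanSpace_fin,
      ENNReal.toReal_mul, ENNReal.toReal_ofReal (by positivity)]
  have hvolF : (volume F).toReal = (n:ℝ) ^ N * sδ := by
    rw [hFdef, coneBad_scale R δ hnpos, ENNReal.toReal_mul,
      ENNReal.toReal_ofReal (by positivity), hsδdef]
  have hbE1 : ∫ ξ in E1, g ξ ≤ r ^ N * ω := by
    calc ∫ ξ in E1, g ξ ≤ ∫ _ in E1, (1:ℝ) :=
        setIntegral_mono_on hIE1 (integrableOn_const measure_closedBall_lt_top.ne)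
          hE1m fun x _ => hg1 x
      _ = (volume E1).toReal := by rw [setIntegral_const, smul_eq_mul, mul_one]; rfl
      _ = r ^ N * ω := hvolE1
  have hbF : ∫ ξ in F, g ξ ≤ (n:ℝ) ^ N * sδ := by
    calc ∫ ξ in F, g ξ ≤ ∫ _ in F, (1:ℝ) :=
        setIntegral_mono_on hIF (integrableOn_const ((measure_mono hFsub).trans_lt
          measure_closedBall_lt_top).ne) hFm fun x _ => hg1 x
      _ = (volume F).toReal := by rw [setIntegral_const, smul_eq_mul, mul_one]; rfl
      _ = (n:ℝ) ^ N * sδ := hvolF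
  set C : ℝ := M / (δ * r) ^ (2 * γs) with hCdef
  have hdrpos : 0 < δ * r := mul_pos hδ hrpos
  have hC0 : 0 ≤ C := by positivity
  have hptE2 : ∀ ξ ∈ E2, g ξ ≤ C := by
    intro ξ hξ
    obtain ⟨⟨hpos, h1ξ, hξn⟩, hcone, hrξ⟩ := hξ
    have hbd := hMf ξ hpos hcone h1ξ
    refine hbd.trans ?_
    rw [hCdef]
    have hprod : (δ * r) ^ (2 * γs) ≤ ∏ α ∈ R, |(inner ℝ α ξ : ℝ)| ^ (2 * k α) := by
      have h1 : (δ * r) ^ (2 * γs) = ∏ α ∈ R, (δ * r) ^ (2 * k α) := by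
        rw [hγs, Finset.mul_sum, Real.rpow_sum_of_pos hdrpos]
      rw [h1]
      refine Finset.prod_le_prod (fun α hα => by positivity) (fun α hα => ?_)
      refine Real.rpow_le_rpow hdrpos.le ?_ (by nlinarith [hk α hα])
      have h2 : δ * r ≤ δ * ‖ξ‖ := mul_le_mul_of_nonneg_left hrξ hδ.le
      have h3 : δ * ‖ξ‖ ≤ (inner ℝ α ξ : ℝ) := (hcone α hα).le
      calc δ * r ≤ (inner ℝ α ξ : ℝ) := le_trans h2 h3
        _ ≤ |(inner ℝ α ξ : ℝ)| := le_abs_self _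
    exact div_le_div_of_nonneg_left hM.le (by positivity) hprod
  have hbE2 : ∫ ξ in E2, g ξ ≤ (n:ℝ) ^ N * ω * C := by
    calc ∫ ξ in E2, g ξ ≤ ∫ _ in E2, C :=
        setIntegral_mono_on hIE2 (integrableOn_const ((measure_mono hE2sub).trans_lt
          measure_closedBall_lt_top).ne) hE2m hptE2
      _ = (volume E2).toReal * C := by rw [setIntegral_const, smul_eq_mul]; rfl
      _ ≤ (n:ℝ) ^ N * ω * C := by
          refine mul_le_mul_of_nonneg_right ?_ hC0
          rw [← hvolball]
          exact ENNReal.toReal_mono hballn (measure_mono hE2sub)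
  have htotal : ∫ ξ in D, g ξ ≤ r ^ N * ω + ((n:ℝ) ^ N * ω * C + (n:ℝ) ^ N * sδ) :=
    hstep1.trans (hstep2.trans (add_le_add hbE1 (add_le_add hbE2 hbF)))
  have hInonneg : 0 ≤ ∫ ξ in D, g ξ := setIntegral_nonneg hDm fun x _ => hg0 x
  have hNpos : (0:ℝ) < (n:ℝ) ^ N := by positivity
  rw [Real.norm_eq_abs, abs_of_nonneg (mul_nonneg (by positivity) hInonneg)]
  have hkey : (1 / (n:ℝ) ^ N) * ∫ ξ in D, g ξ ≤ ω / r + (ω * C + sδ) := by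
    have h1 : (1 / (n:ℝ) ^ N) * ∫ ξ in D, g ξ ≤
        (1 / (n:ℝ) ^ N) * (r ^ N * ω + ((n:ℝ) ^ N * ω * C + (n:ℝ) ^ N * sδ)) :=
      mul_le_mul_of_nonneg_left htotal (by positivity)
    refine h1.trans ?_
    rw [mul_add]
    refine add_le_add ?_ ?_
    · have hnN : (n:ℝ) ^ N = r ^ N * r ^ N := by rw [← hrr, mul_pow]
      have hrpow : r ≤ r ^ N := by
        calc r = r ^ 1 := (pow_one r).symm
          _ ≤ r ^ N := pow_le_pow_right₀ hr1 hN
      have heq2 : (1 / (n:ℝ) ^ N) * (r ^ N * ω) = ω / r ^ N := by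
        rw [hnN]
        have : r ^ N ≠ 0 := by positivity
        field_simp
      rw [heq2]
      exact div_le_div_of_nonneg_left hω0 hrpos hrpow
    · have heq3 : (1 / (n:ℝ) ^ N) * ((n:ℝ) ^ N * ω * C + (n:ℝ) ^ N * sδ) = ω * C + sδ := by
        field_simp
      rw [heq3]
  calc (1 / (n:ℝ) ^ N) * ∫ ξ in D, g ξ ≤ ω / r + (ω * C + sδ) := hkey
    _ < ε/4 + (ε/4 + ε/2) := add_lt_add hn1 (add_lt_add hn2 hm)
    _ = ε := by ring
end
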